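/- Let n ≥ 2 be an integer with prime factorization n = p₁^{e₁} ⋯ p_v^{e_v}, and let k = min{ p_i^{e_i} + 1 : 1 ≤ i ≤ v }. Then there exists an orthogonal array OA(n, k), i.e., a function A : Fin (n²) → Fin k → Fin n such that for any two distinct columns j₁ ≠ j₂, the map i ↦ (A i j₁, A i j₂) from Fin (n²) to Fin n × Fin n is bijective. -/

import Mathlib

/-- An orthogonal array OA(n, k): a function `A : Fin (n²) → Fin k → Fin n` such that
for any two distinct columns the induced pair map is bijective. -/
def IsOA (n k : ℕ) (A : Fin (n ^ 2) → Fin k → Fin n) : Prop :=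
  ∀ j₁ j₂ : Fin k, j₁ ≠ j₂ → Function.Bijective (fun i => (A i j₁, A i j₂))

def OAExists (n k : ℕ) : Prop := ∃ A : Fin (n ^ 2) → Fin k → Fin n, IsOA n k A

lemma isOA_of_injective {n k : ℕ} (A : Fin (n ^ 2) → Fin k → Fin n)
    (h : ∀ j₁ j₂ : Fin k, j₁ ≠ j₂ → Function.Injective (fun i => (A i j₁, A i j₂))) :
    IsOA n k A := by
  intro j₁ j₂ hj
  rw [Fintype.bijective_iff_injective_and_card]
  exact ⟨h j₁ j₂ hj, by simp [sq]⟩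

lemma OAExists.mono {n k k' : ℕ} (hkk : k' ≤ k) (h : OAExists n k) : OAExists n k' := by
  obtain ⟨A, hA⟩ := h
  refine ⟨fun i j => A i (Fin.castLE hkk j), fun j₁ j₂ hj => ?_⟩
  exact hA _ _ (fun he => hj (Fin.castLE_injective hkk he))

lemma oaExists_one (k : ℕ) : OAExists 1 k := by
  refine ⟨fun _ _ => 0, fun j₁ j₂ hj => ?_⟩
  exact ⟨fun a b _ => Fin.ext (by omega), fun p => ⟨⟨0, by norm_num⟩, by
    ext <;> simp [Fin.ext_iff] <;> omega⟩⟩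

/-- auxiliary function on a field -/
private def Bfun {F : Type} [Field F] (p : F × F) : Option F → F
  | none => p.2
  | some c => p.1 + c * p.2

private lemma Bfun_inj {F : Type} [Field F] {o₁ o₂ : Option F} (ho : o₁ ≠ o₂)
    {p p' : F × F} (h1 : Bfun p o₁ = Bfun p' o₁) (h2 : Bfun p o₂ = Bfun p' o₂) :
    p = p' := by
  obtain ⟨x, y⟩ := p
  obtain ⟨x', y'⟩ := p'
  match o₁, o₂ with
  | none, none => exact absurd rfl ho
  | none, some c =>
      simp only [Bfun] at h1 h2
      subst h1
      simp only [Prod.mk.injEq, and_true]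
      linear_combination h2
  | some c, none =>
      simp only [Bfun] at h1 h2
      subst h2
      simp only [Prod.mk.injEq, and_true]
      linear_combination h1
  | some c₁, some c₂ =>
      have hc : c₁ ≠ c₂ := fun h => ho (by rw [h])
      simp only [Bfun] at h1 h2
      have hy : y = y' := by
        have hsub : (c₁ - c₂) * y = (c₁ - c₂) * y' := by ring_nf; linear_combination h1 - h2
        exact mul_left_cancel₀ (sub_ne_zero.mpr hc) hsub
      have hx : x = x' := by linear_combination h1 - c₁ * hy
      simp [hx, hy]

lemma oaExists_field (F : Type) [Field F] [Fintype F] [DecidableEq F] :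
    OAExists (Fintype.card F) (Fintype.card F + 1) := by
  set q := Fintype.card F with hq
  let e : Fin (q ^ 2) ≃ F × F := (Fintype.equivFinOfCardEq (by simp [sq, hq])).symm
  let e2 : Fin (q + 1) ≃ Option F := (Fintype.equivFinOfCardEq (by simp [hq])).symm
  let eF : F ≃ Fin q := Fintype.equivFinOfCardEq rfl
  refine ⟨fun i j => eF (Bfun (e i) (e2 j)), isOA_of_injective _ ?_⟩
  intro j₁ j₂ hj i i' hii
  have ho : e2 j₁ ≠ e2 j₂ := fun h => hj (e2.injective h)
  simp only [Prod.mk.injEq] at hii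
  exact e.injective (Bfun_inj ho (eF.injective hii.1) (eF.injective hii.2))

lemma OAExists.mul {n m k : ℕ} (hA : OAExists n k) (hB : OAExists m k) :
    OAExists (n * m) k := by
  obtain ⟨A, hA⟩ := hA
  obtain ⟨B, hB⟩ := hB
  let en : Fin ((n * m) ^ 2) ≃ Fin (n ^ 2) × Fin (m ^ 2) :=
    Fintype.equivOfCardEq (by simp [mul_pow])
  let e : Fin n × Fin m ≃ Fin (n * m) := Fintype.equivOfCardEq (by simp)
  refine ⟨fun i j => e (A (en i).1 j, B (en i).2 j), isOA_of_injective _ ?_⟩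
  intro j₁ j₂ hj i i' hii
  simp only [Prod.mk.injEq] at hii
  have h1 := e.injective hii.1
  have h2 := e.injective hii.2
  simp only [Prod.mk.injEq] at h1 h2
  have hA' : (en i).1 = (en i').1 :=
    (hA j₁ j₂ hj).injective (by simp [h1.1, h2.1])
  have hB' : (en i).2 = (en i').2 :=
    (hB j₁ j₂ hj).injective (by simp [h1.2, h2.2])
  exact en.injective (Prod.ext hA' hB')

lemma oaExists_prod {k : ℕ} (S : Finset ℕ) (f : ℕ → ℕ)
    (h : ∀ p ∈ S, OAExists (f p) k) : OAExists (∏ p ∈ S, f p) k := by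
  classical
  induction S using Finset.induction_on with
  | empty => simpa using oaExists_one k
  | @insert a s hp ih =>
      rw [Finset.prod_insert hp]
      exact (h a (Finset.mem_insert_self a s)).mul
        (ih fun p hps => h p (Finset.mem_insert_of_mem hps))

/-- Theorem 1: if `n ≥ 2` has prime factorization `n = p₁^{e₁} ⋯ p_v^{e_v}` and
`k = min { p_i^{e_i} + 1 }`, then there exists an orthogonal array OA(n, k). -/
theorem oa_exists_of_factorization (n : ℕ) (hn : 2 ≤ n) (k : ℕ)
    (hk : k = n.primeFactors.inf'
      (Nat.nonempty_primeFactors.mpr (by omega))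
      (fun p => p ^ n.factorization p + 1)) :
    ∃ A : Fin (n ^ 2) → Fin k → Fin n, IsOA n k A := by
  have hn0 : n ≠ 0 := by omega
  have key : OAExists (∏ p ∈ n.primeFactors, p ^ n.factorization p) k := by
    apply oaExists_prod
    intro p hp
    have hprime : p.Prime := Nat.prime_of_mem_primeFactors hp
    haveI : Fact p.Prime := ⟨hprime⟩
    have he : n.factorization p ≠ 0 := by
      have := Nat.pos_of_mem_primeFactors hp
      exact Nat.Prime.factorization_pos_of_dvd hprime hn0 (Nat.dvd_of_mem_primeFactors hp) |>.ne'
    haveI : Fintype (GaloisField p (n.factorization p)) := Fintype.ofFinite _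
    haveI : DecidableEq (GaloisField p (n.factorization p)) := Classical.decEq _
    have hcard : Fintype.card (GaloisField p (n.factorization p)) = p ^ n.factorization p := by
      rw [← Nat.card_eq_fintype_card]; exact GaloisField.card p (n.factorization p) he
    have := oaExists_field (GaloisField p (n.factorization p))
    rw [hcard] at this
    refine this.mono ?_
    rw [hk]
    exact Finset.inf'_le _ hp
  rwa [← Nat.prod_factorization_eq_prod_primeFactors,
    Nat.factorization_prod_pow_eq_self hn0] at key
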